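/- Let a, b, σ, T > 0, set γ = √(a² + 2σ²), and for t ∈ [0,T] define D(t) = (γ − a) + (γ + a)·exp(γ(T − t)), B(t) = 2(1 − exp(γ(T − t)))/D(t), A(t) = (2γ·exp((γ + a)(T − t)/2)/D(t))^(2ab/σ²), and u(t,x) = A(t)·exp(B(t)·x). Then u(T,x) = 1 for all x ∈ ℝ, and for all (t,x) ∈ [0,T] × ℝ the function u satisfies the partial differential equation ∂ₜu(t,x) + a(b − x)·∂ₓu(t,x) + (σ²/2)·x·∂ₓₓu(t,x) − x·u(t,x) = 0. -/

import Mathlib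

open Real

/-- The explicit function `u(t,x) = A(t)·exp(B(t)·x)` solves the CIR bond-pricing
PDE `∂ₜu + a(b - x)∂ₓu + (σ²/2)x∂ₓₓu - xu = 0` on `[0,T] × ℝ`, with `u(T,·) = 1`. -/
theorem cir_bond_pde (a b σ T : ℝ) (ha : 0 < a) (hb : 0 < b) (hσ : 0 < σ) (hT : 0 < T)
    (γ : ℝ) (hγ : γ = Real.sqrt (a ^ 2 + 2 * σ ^ 2))
    (D B A : ℝ → ℝ) (u : ℝ → ℝ → ℝ)
    (hD : ∀ t, D t = (γ - a) + (γ + a) * Real.exp (γ * (T - t)))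
    (hB : ∀ t, B t = 2 * (1 - Real.exp (γ * (T - t))) / D t)
    (hA : ∀ t, A t =
      (2 * γ * Real.exp ((γ + a) * (T - t) / 2) / D t) ^ (2 * a * b / σ ^ 2))
    (hu : ∀ t x, u t x = A t * Real.exp (B t * x)) :
    (∀ x : ℝ, u T x = 1) ∧
    (∀ t ∈ Set.Icc (0 : ℝ) T, ∀ x : ℝ,
      deriv (fun s => u s x) t + a * (b - x) * deriv (fun y => u t y) x +
        σ ^ 2 / 2 * x * deriv (deriv (fun y => u t y)) x - x * u t x = 0) := by
  have hγ2 : γ ^ 2 = a ^ 2 + 2 * σ ^ 2 := by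
    rw [hγ]; exact Real.sq_sqrt (by positivity)
  have hγpos : 0 < γ := by rw [hγ]; positivity
  have hγa : a < γ := by nlinarith [sq_nonneg (γ - a), sq_nonneg σ]
  have hs : σ ^ 2 = (γ ^ 2 - a ^ 2) / 2 := by linarith
  have hDpos : ∀ s, 0 < D s := by
    intro s
    rw [hD]
    have := Real.exp_pos (γ * (T - s))
    nlinarith
  constructor
  · intro x
    rw [hu, hB, hA, hD]
    simp only [sub_self, mul_zero, zero_div, Real.exp_zero, mul_one]
    rw [show γ - a + (γ + a) = 2 * γ by ring]
    rw [div_self (by positivity : (2 : ℝ) * γ ≠ 0)]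
    rw [Real.one_rpow]
    norm_num
  · intro t ht x
    have hDtpos : 0 < D t := hDpos t
    have hDtne : D t ≠ 0 := ne_of_gt hDtpos
    have hE : HasDerivAt (fun s => Real.exp (γ * (T - s)))
        (-(γ * Real.exp (γ * (T - t)))) t := by
      have h := (((hasDerivAt_id t).const_sub T).const_mul γ).exp
      simp only [id_eq] at h
      convert h using 1
      ring
    have hDd : HasDerivAt D ((γ + a) * -(γ * Real.exp (γ * (T - t)))) t := by
      rw [funext hD]
      exact (hE.const_mul (γ + a)).const_add (γ - a)
    have hN : HasDerivAt (fun s => 2 * (1 - Real.exp (γ * (T - s))))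
        (2 * (γ * Real.exp (γ * (T - t)))) t := by
      have h := (hE.const_sub 1).const_mul 2
      exact h.congr_deriv (by ring)
    have hBd : HasDerivAt B
        ((2 * (γ * Real.exp (γ * (T - t))) * D t -
          2 * (1 - Real.exp (γ * (T - t))) * ((γ + a) * -(γ * Real.exp (γ * (T - t))))) /
          D t ^ 2) t := by
      rw [funext hB]
      exact hN.div hDd hDtne
    set dB : ℝ := (2 * (γ * Real.exp (γ * (T - t))) * D t -
          2 * (1 - Real.exp (γ * (T - t))) * ((γ + a) * -(γ * Real.exp (γ * (T - t))))) /
          D t ^ 2 with hdB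
    have hGnum : HasDerivAt (fun s => 2 * γ * Real.exp ((γ + a) * (T - s) / 2))
        (2 * γ * (-((γ + a) / 2) * Real.exp ((γ + a) * (T - t) / 2))) t := by
      have hlin : HasDerivAt (fun s => (γ + a) * (T - s) / 2) (-((γ + a) / 2)) t := by
        have h := (((hasDerivAt_id t).const_sub T).const_mul (γ + a)).div_const 2
        simp only [id_eq] at h
        exact h.congr_deriv (by ring)
      have h := hlin.exp.const_mul (2 * γ)
      exact h.congr_deriv (by ring)
    have hGd : HasDerivAt (fun s => 2 * γ * Real.exp ((γ + a) * (T - s) / 2) / D s)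
        ((2 * γ * (-((γ + a) / 2) * Real.exp ((γ + a) * (T - t) / 2)) * D t -
          2 * γ * Real.exp ((γ + a) * (T - t) / 2) * ((γ + a) * -(γ * Real.exp (γ * (T - t))))) /
          D t ^ 2) t := hGnum.div hDd hDtne
    have hGpos : 0 < 2 * γ * Real.exp ((γ + a) * (T - t) / 2) / D t := by positivity
    have hGne : 2 * γ * Real.exp ((γ + a) * (T - t) / 2) / D t ≠ 0 := ne_of_gt hGpos
    have hAd : HasDerivAt A
        ((2 * γ * (-((γ + a) / 2) * Real.exp ((γ + a) * (T - t) / 2)) * D t -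
          2 * γ * Real.exp ((γ + a) * (T - t) / 2) * ((γ + a) * -(γ * Real.exp (γ * (T - t))))) /
          D t ^ 2 * (2 * a * b / σ ^ 2) *
          (2 * γ * Real.exp ((γ + a) * (T - t) / 2) / D t) ^ (2 * a * b / σ ^ 2 - 1)) t := by
      rw [funext hA]
      exact hGd.rpow_const (Or.inl hGne)
    set dA : ℝ := (2 * γ * (-((γ + a) / 2) * Real.exp ((γ + a) * (T - t) / 2)) * D t -
          2 * γ * Real.exp ((γ + a) * (T - t) / 2) * ((γ + a) * -(γ * Real.exp (γ * (T - t))))) /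
          D t ^ 2 * (2 * a * b / σ ^ 2) *
          (2 * γ * Real.exp ((γ + a) * (T - t) / 2) / D t) ^ (2 * a * b / σ ^ 2 - 1) with hdA
    have hne1 : γ - a + (γ + a) * Real.exp (γ * (T - t)) ≠ 0 := by
      have := hDpos t; rw [hD] at this; linarith
    have fact1 : dB = a * B t - σ ^ 2 / 2 * (B t) ^ 2 + 1 := by
      rw [hdB, hB, hD, hs]
      rw [div_eq_iff (pow_ne_zero 2 hne1)]
      have hinv : (γ - a + (γ + a) * Real.exp (γ * (T - t))) * (γ - a + (γ + a) * Real.exp (γ * (T - t)))⁻¹ = 1 := mul_inv_cancel₀ hne1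
      simp only [div_eq_mul_inv] at hinv ⊢
      linear_combination (-(a * 2 * (1 - Real.exp (γ * (T - t))) * (γ - a + (γ + a) * Real.exp (γ * (T - t)))) + (γ ^ 2 - a ^ 2) * 2⁻¹ * 2⁻¹ * 4 * (1 - Real.exp (γ * (T - t))) ^ 2 * ((γ - a + (γ + a) * Real.exp (γ * (T - t))) * (γ - a + (γ + a) * Real.exp (γ * (T - t)))⁻¹ + 1)) * hinv
    have fact2 : dA = -(a * b) * A t * B t := by
      rw [hdA, hA]
      rw [Real.rpow_sub hGpos, Real.rpow_one]
      have hstep : (2 * γ * (-((γ + a) / 2) * Real.exp ((γ + a) * (T - t) / 2)) * D t -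
          2 * γ * Real.exp ((γ + a) * (T - t) / 2) * ((γ + a) * -(γ * Real.exp (γ * (T - t))))) /
          D t ^ 2 * (2 * a * b / σ ^ 2) =
          -(a * b) * B t * (2 * γ * Real.exp ((γ + a) * (T - t) / 2) / D t) := by
        rw [hB, hD, hs]
        have h2 : γ ^ 2 - a ^ 2 ≠ 0 := by nlinarith
        field_simp
        ring
      rw [show (2 * γ * (-((γ + a) / 2) * Real.exp ((γ + a) * (T - t) / 2)) * D t -
          2 * γ * Real.exp ((γ + a) * (T - t) / 2) * ((γ + a) * -(γ * Real.exp (γ * (T - t))))) /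
          D t ^ 2 * (2 * a * b / σ ^ 2) *
          ((2 * γ * Real.exp ((γ + a) * (T - t) / 2) / D t) ^ (2 * a * b / σ ^ 2) /
            (2 * γ * Real.exp ((γ + a) * (T - t) / 2) / D t)) =
          (2 * γ * (-((γ + a) / 2) * Real.exp ((γ + a) * (T - t) / 2)) * D t -
          2 * γ * Real.exp ((γ + a) * (T - t) / 2) * ((γ + a) * -(γ * Real.exp (γ * (T - t))))) /
          D t ^ 2 * (2 * a * b / σ ^ 2) *
          (2 * γ * Real.exp ((γ + a) * (T - t) / 2) / D t) ^ (2 * a * b / σ ^ 2) /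
          (2 * γ * Real.exp ((γ + a) * (T - t) / 2) / D t) from by ring]
      rw [hstep]
      field_simp
    -- time derivative
    have htd : HasDerivAt (fun s => A s * Real.exp (B s * x))
        (dA * Real.exp (B t * x) + A t * (Real.exp (B t * x) * (dB * x))) t :=
      hAd.mul ((hBd.mul_const x).exp)
    -- spatial derivatives
    have hx1 : ∀ y : ℝ, HasDerivAt (fun z => A t * Real.exp (B t * z))
        (A t * (Real.exp (B t * y) * (B t * 1))) y := by
      intro y
      exact (((hasDerivAt_id y).const_mul (B t)).exp).const_mul (A t)
    have hderiv1 : deriv (fun z => A t * Real.exp (B t * z)) =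
        fun y => A t * (Real.exp (B t * y) * (B t * 1)) :=
      funext fun y => (hx1 y).deriv
    have hx2 : HasDerivAt (fun y => A t * (Real.exp (B t * y) * (B t * 1)))
        (A t * (Real.exp (B t * x) * (B t * 1) * (B t * 1))) x := by
      exact ((((hasDerivAt_id x).const_mul (B t)).exp).mul_const (B t * 1)).const_mul (A t)
    simp only [hu]
    rw [htd.deriv, (hx1 x).deriv]
    rw [hderiv1, hx2.deriv]
    rw [fact1, fact2]
    ring
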